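/- arXiv:1706.06883 — 4 statements merged into one kernel-verified Lean document; each statement's English description precedes it below -/
import Mathlib

section
/- Let θ > 0, μ > 0, ϱ = θ - √(π/2)·μ⁻¹ ≥ 0, ϑ = θ + √(π/2)·μ⁻¹, and let X be an exponential random variable with mean 1 (density f(x) = e^{-x} for x ≥ 0). Define K(t) = 1 for t ≤ ϱ, K(t) = 1/2 - (μ/√(2π))(t - θ) for ϱ < t < ϑ, and K(t) = 0 for t ≥ ϑ. Then E[K(X)] = 1 - (μ/√(2π)) · e^{-θ} · (e^{√(π/(2μ²))} - e^{-√(π/(2μ²))}). -/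
open Real MeasureTheory Set

/-- Closed-form single-link finite-blocklength outage probability: if `X` is exponential
with mean `1` (density `e^{-x}` on `x ≥ 0`) and `K` is the linearized Q-function, then
`E[K(X)] = 1 - (μ/√(2π)) e^{-θ} (e^{√(π/(2μ²))} - e^{-√(π/(2μ²))})`. -/
theorem outage_closed_form_unit_mean
    (θ μ ϱ ϑ : ℝ) (hθ : 0 < θ) (hμ : 0 < μ)
    (hϱ : ϱ = θ - Real.sqrt (π / 2) * μ⁻¹)
    (hϑ : ϑ = θ + Real.sqrt (π / 2) * μ⁻¹)
    (hϱ0 : 0 ≤ ϱ)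
    (K : ℝ → ℝ)
    (hK : ∀ t, K t = if t ≤ ϱ then 1
        else if t < ϑ then 1 / 2 - μ / Real.sqrt (2 * π) * (t - θ) else 0) :
    ∫ x in Set.Ioi (0:ℝ), K x * Real.exp (-x)
      = 1 - μ / Real.sqrt (2 * π) * Real.exp (-θ) *
          (Real.exp (Real.sqrt (π / (2 * μ ^ 2))) - Real.exp (-Real.sqrt (π / (2 * μ ^ 2)))) := by
  have hπ : (0:ℝ) < π := Real.pi_pos
  set c : ℝ := μ / Real.sqrt (2 * π) with hc
  set s : ℝ := Real.sqrt (π / 2) * μ⁻¹ with hsdef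
  have hsq2 : (0:ℝ) < Real.sqrt (π / 2) := Real.sqrt_pos.2 (by positivity)
  have hs0 : 0 < s := by positivity
  have hc0 : 0 < c := by
    have : (0:ℝ) < Real.sqrt (2 * π) := Real.sqrt_pos.2 (by positivity)
    positivity
  -- √(2π) = 2 √(π/2)
  have hsqrt2π : Real.sqrt (2 * π) = 2 * Real.sqrt (π / 2) := by
    rw [show (2:ℝ) * π = 2 ^ 2 * (π / 2) by ring, Real.sqrt_mul (by positivity),
      Real.sqrt_sq (by norm_num)]
  have hcs : c * s = 1 / 2 := by
    rw [hc, hsdef, hsqrt2π]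
    field_simp
  have hsq : Real.sqrt (π / (2 * μ ^ 2)) = s := by
    rw [show π / (2 * μ ^ 2) = (π / 2) * (μ⁻¹) ^ 2 by field_simp,
      Real.sqrt_mul (by positivity), Real.sqrt_sq (by positivity)]
  have hϱϑ : ϱ < ϑ := by rw [hϱ, hϑ]; linarith
  have hϑ0 : (0:ℝ) < ϑ := lt_of_le_of_lt hϱ0 hϱϑ
  set f : ℝ → ℝ := fun x => K x * Real.exp (-x) with hf
  -- values of f on the pieces
  have hf1 : EqOn f (fun x => Real.exp (-x)) (Icc 0 ϱ) := by
    intro x hx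
    simp only [hf, hK x, if_pos hx.2, one_mul]
  have hf2 : EqOn f (fun x => (1 / 2 - c * (x - θ)) * Real.exp (-x)) (Icc ϱ ϑ) := by
    intro x hx
    rcases eq_or_lt_of_le hx.1 with h | h
    · have hx1 : x ≤ ϱ := h.symm.le
      simp only [hf, hK x, if_pos hx1, one_mul]
      have : (1 : ℝ) / 2 - c * (x - θ) = 1 := by
        rw [← h, hϱ]; linear_combination hcs
      rw [this, one_mul]
    · rcases eq_or_lt_of_le hx.2 with h2 | h2
      · have hx1 : ¬ x ≤ ϱ := not_le.2 h
        have hx2 : ¬ x < ϑ := by rw [h2]; exact lt_irrefl _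
        simp only [hf, hK x, if_neg hx1, if_neg hx2, zero_mul]
        have : (1 : ℝ) / 2 - c * (x - θ) = 0 := by
          rw [h2, hϑ]; linear_combination -hcs
        rw [this, zero_mul]
      · simp only [hf, hK x, if_neg (not_le.2 h), if_pos h2]
  have hf3 : EqOn f (fun _ => (0:ℝ)) (Ioi ϑ) := by
    intro x hx
    have hx1 : ¬ x ≤ ϱ := not_le.2 (lt_trans hϱϑ hx)
    have hx2 : ¬ x < ϑ := not_lt.2 (le_of_lt hx)
    simp only [hf, hK x, if_neg hx1, if_neg hx2, zero_mul]
  -- integrability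
  have hcont1 : Continuous fun x : ℝ => Real.exp (-x) :=
    Real.continuous_exp.comp continuous_neg
  have hcont2 : Continuous fun x : ℝ => (1 / 2 - c * (x - θ)) * Real.exp (-x) :=
    ((continuous_const.sub (continuous_const.mul ((continuous_id).sub continuous_const))).mul
      (Real.continuous_exp.comp continuous_neg))
  have hi1 : IntegrableOn f (Ioc 0 ϱ) := by
    refine (hcont1.integrableOn_Ioc).congr_fun ?_ measurableSet_Ioc
    exact fun x hx => (hf1 ⟨hx.1.le, hx.2⟩).symm
  have hi2 : IntegrableOn f (Ioc ϱ ϑ) := by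
    refine (hcont2.integrableOn_Ioc).congr_fun ?_ measurableSet_Ioc
    exact fun x hx => (hf2 ⟨hx.1.le, hx.2⟩).symm
  have hi3 : IntegrableOn f (Ioi ϑ) := by
    refine (integrableOn_zero).congr_fun ?_ measurableSet_Ioi
    exact fun x hx => (hf3 hx).symm
  have hi12 : IntegrableOn f (Ioc 0 ϑ) := by
    rw [← Set.Ioc_union_Ioc_eq_Ioc hϱ0 hϱϑ.le]
    exact hi1.union hi2
  -- split the integral
  have hsplit1 : ∫ x in Ioi (0:ℝ), f x
      = (∫ x in Ioc (0:ℝ) ϑ, f x) + ∫ x in Ioi ϑ, f x := by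
    rw [← setIntegral_union (Set.Ioc_disjoint_Ioi le_rfl) measurableSet_Ioi hi12 hi3,
      Set.Ioc_union_Ioi_eq_Ioi hϑ0.le]
  have hsplit2 : ∫ x in Ioc (0:ℝ) ϑ, f x
      = (∫ x in Ioc (0:ℝ) ϱ, f x) + ∫ x in Ioc ϱ ϑ, f x := by
    rw [← setIntegral_union (Set.Ioc_disjoint_Ioc_of_le le_rfl) measurableSet_Ioc hi1 hi2,
      Set.Ioc_union_Ioc_eq_Ioc hϱ0 hϱϑ.le]
  -- third piece is zero
  have hI3 : ∫ x in Ioi ϑ, f x = 0 := by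
    rw [setIntegral_congr_fun measurableSet_Ioi hf3]; simp
  -- first piece
  have hI1 : ∫ x in Ioc (0:ℝ) ϱ, f x = 1 - Real.exp (-ϱ) := by
    rw [setIntegral_congr_fun measurableSet_Ioc (fun x hx => hf1 ⟨hx.1.le, hx.2⟩),
      ← intervalIntegral.integral_of_le hϱ0]
    have : ∀ x ∈ Set.uIcc (0:ℝ) ϱ, HasDerivAt (fun t => -Real.exp (-t)) (Real.exp (-x)) x := by
      intro x _
      have h1 : HasDerivAt (fun t : ℝ => Real.exp (-t)) (Real.exp (-x) * (-1)) x :=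
        (Real.hasDerivAt_exp (-x)).comp x (hasDerivAt_neg x)
      have h3 := h1.neg
      simp only [mul_neg, mul_one, neg_neg] at h3
      exact h3
    rw [intervalIntegral.integral_eq_sub_of_hasDerivAt this
      (hcont1.intervalIntegrable _ _)]
    simp; ring
  -- middle piece via FTC
  have hI2 : ∫ x in Ioc ϱ ϑ, f x = c * Real.exp (-ϑ) - (c - 1) * Real.exp (-ϱ) := by
    rw [setIntegral_congr_fun measurableSet_Ioc (fun x hx => hf2 ⟨hx.1.le, hx.2⟩),
      ← intervalIntegral.integral_of_le hϱϑ.le]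
    have hderiv : ∀ x ∈ Set.uIcc ϱ ϑ,
        HasDerivAt (fun t => (c * t + c - 1 / 2 - c * θ) * Real.exp (-t))
          ((1 / 2 - c * (x - θ)) * Real.exp (-x)) x := by
      intro x _
      have h1 : HasDerivAt (fun t : ℝ => Real.exp (-t)) (Real.exp (-x) * (-1)) x :=
        (Real.hasDerivAt_exp (-x)).comp x (hasDerivAt_neg x)
      have h2 : HasDerivAt (fun t : ℝ => c * t + c - 1 / 2 - c * θ) c x := by
        have heq : (fun t : ℝ => c * t + c - 1 / 2 - c * θ)
            = fun t : ℝ => c * t + (c - 1 / 2 - c * θ) := by funext t; ring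
        rw [heq]
        simpa using (((hasDerivAt_id x).const_mul c).add_const (c - 1/2 - c*θ))
      have := h2.mul h1
      exact this.congr_deriv (by ring)
    rw [intervalIntegral.integral_eq_sub_of_hasDerivAt hderiv
      (hcont2.intervalIntegrable _ _)]
    have e1 : c * ϑ + c - 1 / 2 - c * θ = c := by
      rw [hϑ]
      have : c * (θ + s) + c - 1 / 2 - c * θ = c * s + c - 1/2 := by ring
      rw [this, hcs]; ring
    have e2 : c * ϱ + c - 1 / 2 - c * θ = c - 1 := by
      rw [hϱ]
      have : c * (θ - s) + c - 1 / 2 - c * θ = -(c * s) + c - 1/2 := by ring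
      rw [this, hcs]; ring
    rw [e1, e2]
  -- assemble
  rw [show (∫ x in Set.Ioi (0:ℝ), K x * Real.exp (-x)) = ∫ x in Ioi (0:ℝ), f x from rfl,
    hsplit1, hsplit2, hI1, hI2, hI3, hsq]
  have hexp1 : Real.exp (-ϱ) = Real.exp (-θ) * Real.exp s := by
    rw [← Real.exp_add]; congr 1; rw [hϱ]; ring
  have hexp2 : Real.exp (-ϑ) = Real.exp (-θ) * Real.exp (-s) := by
    rw [← Real.exp_add]; congr 1; rw [hϑ]; ring
  rw [hexp1, hexp2]
  ring
end

section
/- Let Z and Y be independent exponential random variables with means Ω_Z ≠ Ω_Y, W = Z + Y, and let K be the piecewise-linear function K(t) = 1 for t ≤ ϱ, K(t) = 1/2 - (μ/√(2π))(t - θ) for ϱ < t < ϑ, K(t) = 0 for t ≥ ϑ, where θ > 0, μ > 0, ϱ = θ - √(π/2)μ⁻¹ ≥ 0, ϑ = θ + √(π/2)μ⁻¹. Then E[K(W)] = (1/(Ω_Z - Ω_Y))·[Ω_Z - Ω_Y + Ω_Z e^{-ϑ/Ω_Z}λ₁ + Ω_Z e^{-ϱ/Ω_Z}λ₂ + Ω_Y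 e^{-ϑ/Ω_Y}λ₃ + Ω_Y e^{-ϱ/Ω_Y}λ₄], where λ₁ = (μϑ + μΩ_Z - μθ)/√(2π) - 1/2, λ₂ = (μθ - μϱ - μΩ_Z)/√(2π) - 1/2, λ₃ = 1/2 - (μϑ + μΩ_Y - μθ)/√(2π), λ₄ = 1/2 + (μϱ + μΩ_Y - μθ)/√(2π). -/
open Real MeasureTheory Set

private lemma sqrt_pi_half : Real.sqrt (π / 2) = Real.sqrt (2 * π) / 2 := by
  rw [show (2:ℝ) * π = 4 * (π / 2) by ring, Real.sqrt_mul (by norm_num),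
    show Real.sqrt 4 = 2 by rw [show (4:ℝ) = 2 ^ 2 by norm_num, Real.sqrt_sq (by norm_num)]]
  ring

private lemma key (θ μ ϱ ϑ Ω : ℝ) (hμ : 0 < μ) (hΩ : 0 < Ω)
    (hϱ : ϱ = θ - Real.sqrt (π / 2) * μ⁻¹)
    (hϑ : ϑ = θ + Real.sqrt (π / 2) * μ⁻¹)
    (hϱ0 : 0 ≤ ϱ)
    (K : ℝ → ℝ)
    (hK : ∀ t, K t = if t ≤ ϱ then 1
        else if t < ϑ then 1 / 2 - μ / Real.sqrt (2 * π) * (t - θ) else 0) :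
    IntegrableOn (fun w => K w * Real.exp (-w / Ω)) (Ioi 0) ∧
    ∫ w in Ioi (0:ℝ), K w * Real.exp (-w / Ω)
      = Ω + Ω ^ 2 * (μ / Real.sqrt (2 * π)) * Real.exp (-ϑ / Ω)
          - Ω ^ 2 * (μ / Real.sqrt (2 * π)) * Real.exp (-ϱ / Ω) := by
  have hs2π : (0:ℝ) < Real.sqrt (2 * π) := Real.sqrt_pos.mpr (by positivity)
  set c : ℝ := μ / Real.sqrt (2 * π) with hc
  have hcθ : c * (ϑ - θ) = 1 / 2 := by
    rw [hc, hϑ, sqrt_pi_half]; field_simp; ring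
  have hcϱ : c * (ϱ - θ) = -(1 / 2) := by
    rw [hc, hϱ, sqrt_pi_half]; field_simp; ring
  have hϱϑ : ϱ ≤ ϑ := by
    rw [hϱ, hϑ]
    have : 0 ≤ Real.sqrt (π / 2) * μ⁻¹ := by positivity
    linarith
  have hϑ0 : (0:ℝ) ≤ ϑ := le_trans hϱ0 hϱϑ
  -- pointwise identities on the three pieces
  have h1 : EqOn (fun w => K w * Real.exp (-w / Ω)) (fun w => Real.exp (-w / Ω)) (Ioc 0 ϱ) := by
    intro w hw
    simp only [hK w, if_pos hw.2, one_mul]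
  have h2 : EqOn (fun w => K w * Real.exp (-w / Ω))
      (fun w => (1 / 2 - c * (w - θ)) * Real.exp (-w / Ω)) (Ioc ϱ ϑ) := by
    intro w hw
    simp only [hK w, if_neg (not_le.mpr hw.1)]
    rcases lt_or_eq_of_le hw.2 with h | h
    · rw [if_pos h]
    · rw [if_neg (by rw [h]; exact lt_irrefl _), h]
      have : (1:ℝ) / 2 - c * (ϑ - θ) = 0 := by rw [hcθ]; ring
      rw [this]; try ring
  have h3 : EqOn (fun w => K w * Real.exp (-w / Ω)) (fun _ => (0:ℝ)) (Ioi ϑ) := by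
    intro w hw
    simp only [hK w, if_neg (not_le.mpr (lt_of_le_of_lt hϱϑ hw)), if_neg (not_lt.mpr (le_of_lt (mem_Ioi.mp hw)))]
    ring
  -- integrability
  have cont1 : Continuous fun w : ℝ => Real.exp (-w / Ω) := by fun_prop
  have cont2 : Continuous fun w : ℝ => (1 / 2 - c * (w - θ)) * Real.exp (-w / Ω) := by fun_prop
  have i1 : IntegrableOn (fun w => K w * Real.exp (-w / Ω)) (Ioc 0 ϱ) :=
    (cont1.integrableOn_Ioc).congr_fun h1.symm measurableSet_Ioc
  have i2 : IntegrableOn (fun w => K w * Real.exp (-w / Ω)) (Ioc ϱ ϑ) :=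
    (cont2.integrableOn_Ioc).congr_fun h2.symm measurableSet_Ioc
  have i3 : IntegrableOn (fun w => K w * Real.exp (-w / Ω)) (Ioi ϑ) :=
    (integrableOn_zero).congr_fun h3.symm measurableSet_Ioi
  have d12 : Disjoint (Ioc (0:ℝ) ϱ) (Ioc ϱ ϑ) :=
    Set.Ioc_disjoint_Ioc_of_le le_rfl
  have d3 : Disjoint (Ioc (0:ℝ) ϑ) (Ioi ϑ) := Set.Ioc_disjoint_Ioi le_rfl
  have hu1 : Ioc (0:ℝ) ϱ ∪ Ioc ϱ ϑ = Ioc 0 ϑ := Set.Ioc_union_Ioc_eq_Ioc hϱ0 hϱϑ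
  have hu2 : Ioc (0:ℝ) ϑ ∪ Ioi ϑ = Ioi 0 := Set.Ioc_union_Ioi_eq_Ioi hϑ0
  have i12 : IntegrableOn (fun w => K w * Real.exp (-w / Ω)) (Ioc 0 ϑ) := by
    rw [← hu1]; exact i1.union i2
  have iall : IntegrableOn (fun w => K w * Real.exp (-w / Ω)) (Ioi 0) := by
    rw [← hu2]; exact i12.union i3
  refine ⟨iall, ?_⟩
  have split1 : ∫ w in Ioi (0:ℝ), K w * Real.exp (-w / Ω)
      = (∫ w in Ioc (0:ℝ) ϑ, K w * Real.exp (-w / Ω))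
        + ∫ w in Ioi ϑ, K w * Real.exp (-w / Ω) := by
    rw [← hu2, setIntegral_union d3 measurableSet_Ioi i12 i3]
  have split2 : ∫ w in Ioc (0:ℝ) ϑ, K w * Real.exp (-w / Ω)
      = (∫ w in Ioc (0:ℝ) ϱ, K w * Real.exp (-w / Ω))
        + ∫ w in Ioc ϱ ϑ, K w * Real.exp (-w / Ω) := by
    rw [← hu1, setIntegral_union d12 measurableSet_Ioc i1 i2]
  have e3 : ∫ w in Ioi ϑ, K w * Real.exp (-w / Ω) = 0 := by
    rw [setIntegral_congr_fun measurableSet_Ioi h3]; simp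
  have e1 : ∫ w in Ioc (0:ℝ) ϱ, K w * Real.exp (-w / Ω) = Ω - Ω * Real.exp (-ϱ / Ω) := by
    rw [setIntegral_congr_fun measurableSet_Ioc h1, ← intervalIntegral.integral_of_le hϱ0]
    have hderiv : ∀ x ∈ uIcc (0:ℝ) ϱ,
        HasDerivAt (fun w => -Ω * Real.exp (-w / Ω)) (Real.exp (-x / Ω)) x := by
      intro x _
      have h := (((hasDerivAt_id x).neg.div_const Ω).exp).const_mul (-Ω)
      refine h.congr_deriv ?_
      simp only [Pi.neg_apply, id]
      field_simp
    rw [intervalIntegral.integral_eq_sub_of_hasDerivAt hderiv (cont1.intervalIntegrable 0 ϱ)]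
    simp [Real.exp_zero]
    ring
  have e2 : ∫ w in Ioc ϱ ϑ, K w * Real.exp (-w / Ω)
      = Ω ^ 2 * c * Real.exp (-ϑ / Ω) - (Ω ^ 2 * c - Ω) * Real.exp (-ϱ / Ω) := by
    rw [setIntegral_congr_fun measurableSet_Ioc h2, ← intervalIntegral.integral_of_le hϱϑ]
    have hderiv : ∀ x ∈ uIcc ϱ ϑ,
        HasDerivAt (fun w => (-Ω * (1 / 2 - c * (w - θ)) + Ω ^ 2 * c) * Real.exp (-w / Ω))
          ((1 / 2 - c * (x - θ)) * Real.exp (-x / Ω)) x := by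
      intro x _
      have hg : HasDerivAt (fun w : ℝ => -Ω * (1 / 2 - c * (w - θ)) + Ω ^ 2 * c) (Ω * c) x := by
        have h0 := (((((hasDerivAt_id x).sub_const θ).const_mul c).const_sub (1/2)).const_mul (-Ω)).add_const (Ω ^ 2 * c)
        refine h0.congr_deriv ?_
        ring
      have he : HasDerivAt (fun w : ℝ => Real.exp (-w / Ω)) (Real.exp (-x / Ω) * (-1 / Ω)) x :=
        ((hasDerivAt_id x).neg.div_const Ω).exp
      have h := hg.mul he
      refine h.congr_deriv ?_
      field_simp
      ring
    rw [intervalIntegral.integral_eq_sub_of_hasDerivAt hderiv (cont2.intervalIntegrable ϱ ϑ)]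
    have hFϑ : -Ω * (1 / 2 - c * (ϑ - θ)) + Ω ^ 2 * c = Ω ^ 2 * c := by rw [hcθ]; ring
    have hFϱ : -Ω * (1 / 2 - c * (ϱ - θ)) + Ω ^ 2 * c = Ω ^ 2 * c - Ω := by rw [hcϱ]; ring
    rw [hFϑ, hFϱ]
  rw [split1, split2, e1, e2, e3]
  ring

/-- Closed-form MRC outage (unequal average SNR case): `E[K(W)]`, where `W` has the
density of a sum of independent exponentials with distinct means `Ω_Z ≠ Ω_Y`, equals the
closed-form expression with coefficients `lam₁, lam₂, lam₃, lam₄`. -/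
theorem mrc_outage_closed_form_distinct
    (θ μ ϱ ϑ ΩZ ΩY : ℝ) (hθ : 0 < θ) (hμ : 0 < μ)
    (hZ : 0 < ΩZ) (hY : 0 < ΩY) (hne : ΩZ ≠ ΩY)
    (hϱ : ϱ = θ - Real.sqrt (π / 2) * μ⁻¹)
    (hϑ : ϑ = θ + Real.sqrt (π / 2) * μ⁻¹)
    (hϱ0 : 0 ≤ ϱ)
    (K : ℝ → ℝ)
    (hK : ∀ t, K t = if t ≤ ϱ then 1
        else if t < ϑ then 1 / 2 - μ / Real.sqrt (2 * π) * (t - θ) else 0)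
    (lam₁ lam₂ lam₃ lam₄ : ℝ)
    (hlam₁ : lam₁ = (μ * ϑ + μ * ΩZ - μ * θ) / Real.sqrt (2 * π) - 1 / 2)
    (hlam₂ : lam₂ = (μ * θ - μ * ϱ - μ * ΩZ) / Real.sqrt (2 * π) - 1 / 2)
    (hlam₃ : lam₃ = 1 / 2 - (μ * ϑ + μ * ΩY - μ * θ) / Real.sqrt (2 * π))
    (hlam₄ : lam₄ = 1 / 2 + (μ * ϱ + μ * ΩY - μ * θ) / Real.sqrt (2 * π)) :
    ∫ w in Set.Ioi (0:ℝ),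
        K w * ((Real.exp (-w / ΩZ) - Real.exp (-w / ΩY)) / (ΩZ - ΩY))
      = (1 / (ΩZ - ΩY)) *
          (ΩZ - ΩY + ΩZ * Real.exp (-ϑ / ΩZ) * lam₁ + ΩZ * Real.exp (-ϱ / ΩZ) * lam₂
            + ΩY * Real.exp (-ϑ / ΩY) * lam₃ + ΩY * Real.exp (-ϱ / ΩY) * lam₄) := by
  have hs2π : (0:ℝ) < Real.sqrt (2 * π) := Real.sqrt_pos.mpr (by positivity)
  obtain ⟨iZ, eZ⟩ := key θ μ ϱ ϑ ΩZ hμ hZ hϱ hϑ hϱ0 K hK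
  obtain ⟨iY, eY⟩ := key θ μ ϱ ϑ ΩY hμ hY hϱ hϑ hϱ0 K hK
  have hD : ΩZ - ΩY ≠ 0 := sub_ne_zero.mpr hne
  have hcongr : ∀ w : ℝ, K w * ((Real.exp (-w / ΩZ) - Real.exp (-w / ΩY)) / (ΩZ - ΩY))
      = (ΩZ - ΩY)⁻¹ * (K w * Real.exp (-w / ΩZ))
        - (ΩZ - ΩY)⁻¹ * (K w * Real.exp (-w / ΩY)) := by
    intro w; field_simp
  simp_rw [hcongr]
  rw [integral_sub (iZ.const_mul _) (iY.const_mul _), integral_const_mul, integral_const_mul,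
    eZ, eY]
  have hl1 : lam₁ = μ * ΩZ / Real.sqrt (2 * π) := by
    rw [hlam₁, hϑ, sqrt_pi_half]; field_simp; ring
  have hl2 : lam₂ = -(μ * ΩZ / Real.sqrt (2 * π)) := by
    rw [hlam₂, hϱ, sqrt_pi_half]; field_simp; ring
  have hl3 : lam₃ = -(μ * ΩY / Real.sqrt (2 * π)) := by
    rw [hlam₃, hϑ, sqrt_pi_half]; field_simp; ring
  have hl4 : lam₄ = μ * ΩY / Real.sqrt (2 * π) := by
    rw [hlam₄, hϱ, sqrt_pi_half]; field_simp; ring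
  rw [hl1, hl2, hl3, hl4]
  field_simp
  ring
end

section
/- Let Z and Y be independent exponential random variables, both with mean Ω > 0, W = Z + Y (so W has density (w/Ω²)e^{-w/Ω}), and let K be the piecewise-linear function as above with parameters θ > 0, μ > 0, ϱ = θ - √(π/2)μ⁻¹ ≥ 0, ϑ = θ + √(π/2)μ⁻¹. Then E[K(W)] = 1 - (e^{-ϱ/Ω} + e^{-ϑ/Ω})/2 - (ϱ e^{-ϱ/Ω})/Ω + (ϱ e^{-ϱ/Ω} - ϑ e^{-ϑ/Ω})/(2Ω) + (μθ(e^{-ϱ/Ω} - e^{-ϑ/Ω}))/√(2π) + (2μξ)/√(2π) + (μτ)/(Ω√(2π)), where τ = ϑ²e^{-ϑ/Ω} - ϱ²e^{-ϱ/Ω} - θϑe^{-ϑ/Ω} + θϱe^{-ϱ/Ω} and ξ = ϑe^{-ϑ/Ω} - ϱe^{-ϱ/Ω} + Ωe^{-ϑ/Ω} - Ωe^{-ϱ/Ω}. -/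
open Real MeasureTheory
set_option maxHeartbeats 1000000

/-- Closed-form MRC outage (equal average SNR case): `E[K(W)]` for `W` with the
Gamma(2,Ω) density `(w/Ω²)e^{-w/Ω}` equals the closed-form expression involving `τ` and `ξ`. -/
theorem mrc_outage_closed_form_equal
    (θ μ ϱ ϑ Ω : ℝ) (hθ : 0 < θ) (hμ : 0 < μ) (hΩ : 0 < Ω)
    (hϱ : ϱ = θ - Real.sqrt (π / 2) * μ⁻¹)
    (hϑ : ϑ = θ + Real.sqrt (π / 2) * μ⁻¹)
    (hϱ0 : 0 ≤ ϱ)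
    (K : ℝ → ℝ)
    (hK : ∀ t, K t = if t ≤ ϱ then 1
        else if t < ϑ then 1 / 2 - μ / Real.sqrt (2 * π) * (t - θ) else 0)
    (τ ξ : ℝ)
    (hτ : τ = ϑ ^ 2 * Real.exp (-ϑ / Ω) - ϱ ^ 2 * Real.exp (-ϱ / Ω)
        - θ * ϑ * Real.exp (-ϑ / Ω) + θ * ϱ * Real.exp (-ϱ / Ω))
    (hξ : ξ = ϑ * Real.exp (-ϑ / Ω) - ϱ * Real.exp (-ϱ / Ω)
        + Ω * Real.exp (-ϑ / Ω) - Ω * Real.exp (-ϱ / Ω)) :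
    ∫ w in Set.Ioi (0:ℝ), K w * (w / Ω ^ 2 * Real.exp (-w / Ω))
      = 1 - (Real.exp (-ϱ / Ω) + Real.exp (-ϑ / Ω)) / 2
          - ϱ * Real.exp (-ϱ / Ω) / Ω
          + (ϱ * Real.exp (-ϱ / Ω) - ϑ * Real.exp (-ϑ / Ω)) / (2 * Ω)
          + μ * θ * (Real.exp (-ϱ / Ω) - Real.exp (-ϑ / Ω)) / Real.sqrt (2 * π)
          + 2 * μ * ξ / Real.sqrt (2 * π)
          + μ * τ / (Ω * Real.sqrt (2 * π)) := by
  have hπ : (0:ℝ) < π := Real.pi_pos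
  have hs2 : (0:ℝ) < Real.sqrt (2 * π) := Real.sqrt_pos.mpr (by positivity)
  have hsπ2 : (0:ℝ) < Real.sqrt (π / 2) := Real.sqrt_pos.mpr (by positivity)
  set c : ℝ := μ / Real.sqrt (2 * π) with hc
  have hsq : Real.sqrt (2 * π) = 2 * Real.sqrt (π / 2) := by
    rw [show (2:ℝ) * π = 2 ^ 2 * (π / 2) by ring, Real.sqrt_mul (by positivity),
      Real.sqrt_sq (by norm_num)]
  have key : c * (Real.sqrt (π / 2) * μ⁻¹) = 1 / 2 := by
    rw [hc, hsq]; field_simp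
  have hϱθ : ϱ ≤ ϑ := by
    have : 0 ≤ Real.sqrt (π / 2) * μ⁻¹ := by positivity
    rw [hϱ, hϑ]; linarith
  have h0ϑ : (0:ℝ) ≤ ϑ := le_trans hϱ0 hϱθ
  set f : ℝ → ℝ := fun w => K w * (w / Ω ^ 2 * Real.exp (-w / Ω)) with hf
  set f₁ : ℝ → ℝ := fun w => w / Ω ^ 2 * Real.exp (-w / Ω) with hf1
  set f₂ : ℝ → ℝ := fun w => (1 / 2 - c * (w - θ)) * (w / Ω ^ 2 * Real.exp (-w / Ω)) with hf2
  have hcont1 : Continuous f₁ := by fun_prop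
  have hcont2 : Continuous f₂ := by fun_prop
  -- pointwise identifications
  have eq1 : Set.EqOn f f₁ (Set.Ioc 0 ϱ) := by
    intro w hw
    simp only [hf, hf1, hK w, if_pos hw.2, one_mul]
  have eq2 : Set.EqOn f f₂ (Set.Ioc ϱ ϑ) := by
    intro w hw
    have h1 : ¬ w ≤ ϱ := not_le.mpr hw.1
    by_cases h : w < ϑ
    · simp only [hf, hf2, hK w, if_neg h1, if_pos h]
    · have hw2 : w = ϑ := le_antisymm hw.2 (not_lt.mp h)
      have hlin : (1 / 2 - c * (w - θ)) = 0 := by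
        rw [hw2, hϑ, show θ + Real.sqrt (π / 2) * μ⁻¹ - θ = Real.sqrt (π / 2) * μ⁻¹ by ring, key]
        ring
      simp only [hf, hf2, hK w, if_neg h1, if_neg h, hlin, zero_mul]
  have eq3 : Set.EqOn f (fun _ => (0:ℝ)) (Set.Ioi ϑ) := by
    intro w hw
    have hw1 : ¬ w ≤ ϱ := not_le.mpr (lt_of_le_of_lt hϱθ hw)
    have hw2 : ¬ w < ϑ := not_lt.mpr (le_of_lt hw)
    simp only [hf, hK w, if_neg hw1, if_neg hw2, zero_mul]
  -- integrabilities
  have hi1 : IntegrableOn f (Set.Ioc 0 ϱ) :=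
    (integrableOn_congr_fun eq1 measurableSet_Ioc).mpr (hcont1.integrableOn_Ioc)
  have hi2 : IntegrableOn f (Set.Ioc ϱ ϑ) :=
    (integrableOn_congr_fun eq2 measurableSet_Ioc).mpr (hcont2.integrableOn_Ioc)
  have hi3 : IntegrableOn f (Set.Ioi ϑ) :=
    (integrableOn_congr_fun eq3 measurableSet_Ioi).mpr (integrableOn_zero)
  -- split the integral
  have dA : Disjoint (Set.Ioc (0:ℝ) ϱ) (Set.Ioc ϱ ϑ) :=
    Set.Ioc_disjoint_Ioc.mpr (le_trans inf_le_left le_sup_right)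
  have splitA : ∫ w in Set.Ioc (0:ℝ) ϑ, f w
      = (∫ w in Set.Ioc 0 ϱ, f w) + ∫ w in Set.Ioc ϱ ϑ, f w := by
    rw [← Set.Ioc_union_Ioc_eq_Ioc hϱ0 hϱθ]
    exact setIntegral_union dA measurableSet_Ioc hi1 hi2
  have splitB : ∫ w in Set.Ioi (0:ℝ), f w
      = (∫ w in Set.Ioc 0 ϑ, f w) + ∫ w in Set.Ioi ϑ, f w := by
    rw [← Set.Ioc_union_Ioi_eq_Ioi h0ϑ]
    exact setIntegral_union (Set.Ioc_disjoint_Ioi le_rfl) measurableSet_Ioi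
      ((hi1.union hi2).congr_set_ae (by rw [Set.Ioc_union_Ioc_eq_Ioc hϱ0 hϱθ]; exact Filter.EventuallyEq.rfl)) hi3
  have split : ∫ w in Set.Ioi (0:ℝ), f w
      = (∫ w in Set.Ioc 0 ϱ, f w) + (∫ w in Set.Ioc ϱ ϑ, f w) + ∫ w in Set.Ioi ϑ, f w := by
    rw [splitB, splitA]
  -- antiderivatives
  have hF1 : ∀ w : ℝ, HasDerivAt (fun w => -((w + Ω) * Real.exp (-w / Ω)) / Ω) (f₁ w) w := by
    intro w
    have hlin : HasDerivAt (fun w : ℝ => -w / Ω) (-1 / Ω) w := (hasDerivAt_id w).neg.div_const Ω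
    have hE := hlin.exp
    have h := (((hasDerivAt_id w).add_const Ω).mul hE).neg.div_const Ω
    refine h.congr_deriv ?_
    simp only [f₁, id]
    field_simp
    ring
  have hF2 : ∀ w : ℝ, HasDerivAt
      (fun w => Real.exp (-w / Ω) / Ω * (c * (w ^ 2 + 2 * Ω * w + 2 * Ω ^ 2) - (1 / 2 + c * θ) * (w + Ω)))
      (f₂ w) w := by
    intro w
    have hlin : HasDerivAt (fun w : ℝ => -w / Ω) (-1 / Ω) w := (hasDerivAt_id w).neg.div_const Ω
    have hE := hlin.exp.div_const Ω
    have hpoly : HasDerivAt (fun w : ℝ => c * (w ^ 2 + 2 * Ω * w + 2 * Ω ^ 2) - (1 / 2 + c * θ) * (w + Ω))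
        (c * (2 * w + 2 * Ω) - (1 / 2 + c * θ) * 1) w := by
      have h1 : HasDerivAt (fun w : ℝ => w ^ 2 + 2 * Ω * w + 2 * Ω ^ 2) (2 * w + 2 * Ω) w := by
        simpa using ((hasDerivAt_pow 2 w).add (((hasDerivAt_id w).const_mul (2 * Ω)))).add_const (2 * Ω ^ 2)
      exact (h1.const_mul c).sub (((hasDerivAt_id w).add_const Ω).const_mul (1 / 2 + c * θ))
    have h := hE.mul hpoly
    refine h.congr_deriv ?_
    simp only [f₂]
    field_simp
    ring
  have I1 : ∫ w in Set.Ioc 0 ϱ, f w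
      = (-((ϱ + Ω) * Real.exp (-ϱ / Ω)) / Ω) - (-(((0:ℝ) + Ω) * Real.exp (-(0:ℝ) / Ω)) / Ω) := by
    rw [setIntegral_congr_fun measurableSet_Ioc eq1,
      ← intervalIntegral.integral_of_le hϱ0]
    exact intervalIntegral.integral_eq_sub_of_hasDerivAt (fun w _ => hF1 w)
      (hcont1.intervalIntegrable _ _)
  have I2 : ∫ w in Set.Ioc ϱ ϑ, f w
      = (Real.exp (-ϑ / Ω) / Ω * (c * (ϑ ^ 2 + 2 * Ω * ϑ + 2 * Ω ^ 2) - (1 / 2 + c * θ) * (ϑ + Ω)))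
      - (Real.exp (-ϱ / Ω) / Ω * (c * (ϱ ^ 2 + 2 * Ω * ϱ + 2 * Ω ^ 2) - (1 / 2 + c * θ) * (ϱ + Ω))) := by
    rw [setIntegral_congr_fun measurableSet_Ioc eq2,
      ← intervalIntegral.integral_of_le hϱθ]
    exact intervalIntegral.integral_eq_sub_of_hasDerivAt (fun w _ => hF2 w)
      (hcont2.intervalIntegrable _ _)
  have I3 : ∫ w in Set.Ioi ϑ, f w = 0 := by
    rw [setIntegral_congr_fun measurableSet_Ioi eq3]
    simp
  rw [show (∫ w in Set.Ioi (0:ℝ), K w * (w / Ω ^ 2 * Real.exp (-w / Ω))) = ∫ w in Set.Ioi (0:ℝ), f w from rfl,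
    split, I1, I2, I3, hτ, hξ]
  have e0 : Real.exp (-(0:ℝ) / Ω) = 1 := by norm_num
  rw [e0]
  simp only [hc]
  field_simp
  ring
end

section
/- Let ε(Ω) = 1 - (μΩ/√(2π))·e^{-θ/Ω}·(e^{√(π/2)/(μΩ)} - e^{-√(π/2)/(μΩ)}) be the single-link finite-blocklength outage probability with average SNR Ω > 0 and fixed parameters θ > 0, μ > 0. Then ε(Ω) is strictly decreasing in Ω, and ε(Ω) → 0 as Ω → ∞. -/
open Real Filter

lemma int_exp_aux (a b t : ℝ) (ht : t ≠ 0) :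
    ∫ s in a..b, Real.exp (-(s * t)) = t⁻¹ * (Real.exp (-(a * t)) - Real.exp (-(b * t))) := by
  have h1 : ∫ s in a..b, Real.exp (-(s * t))
      = t⁻¹ • ∫ x in a * t..b * t, Real.exp (-x) :=
    intervalIntegral.integral_comp_mul_right (fun x => Real.exp (-x)) ht
  rw [h1]
  rw [intervalIntegral.integral_comp_neg (fun x => Real.exp x)]
  rw [integral_exp]
  rw [smul_eq_mul]

/-- The single-link finite-blocklength outage probability
`ε(Ω) = 1 - (μΩ/√(2π)) e^{-θ/Ω} (e^{√(π/2)/(μΩ)} - e^{-√(π/2)/(μΩ)})` is strictly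
decreasing in the average SNR `Ω` on `(0,∞)` and tends to `0` as `Ω → ∞`. -/
theorem outage_strictAnti_tendsto_zero
    (θ μ : ℝ) (hθ : 0 < θ) (hμ : 0 < μ)
    (hϱ0 : 0 ≤ θ - Real.sqrt (π / 2) * μ⁻¹)
    (ε : ℝ → ℝ)
    (hε : ∀ Ω, ε Ω = 1 - μ * Ω / Real.sqrt (2 * π) * Real.exp (-θ / Ω) *
        (Real.exp (Real.sqrt (π / 2) / (μ * Ω)) - Real.exp (-(Real.sqrt (π / 2) / (μ * Ω))))) :
    StrictAntiOn ε (Set.Ioi 0) ∧ Tendsto ε atTop (nhds 0) := by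
  set c : ℝ := Real.sqrt (π / 2) * μ⁻¹ with hc
  have hπ2 : (0:ℝ) < π / 2 := by positivity
  have hcpos : 0 < c := mul_pos (Real.sqrt_pos.2 hπ2) (inv_pos.2 hμ)
  set ϱ : ℝ := θ - c with hϱ
  set ϑ : ℝ := θ + c with hϑ
  have hϱnn : 0 ≤ ϱ := hϱ0
  have hϑpos : 0 < ϑ := by nlinarith
  have hab : ϱ < ϑ := by simp only [hϱ, hϑ]; linarith
  have hsqrt : Real.sqrt (2 * π) = 2 * Real.sqrt (π / 2) := by
    rw [show (2:ℝ) * π = 4 * (π / 2) by ring, show (4:ℝ) * (π/2) = 2^2 * (π/2) by ring,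
      Real.sqrt_mul (by positivity), Real.sqrt_sq (by norm_num)]
  have hsπ : 0 < Real.sqrt (π / 2) := Real.sqrt_pos.2 hπ2
  -- key: ε Ω = 1 - (2c)⁻¹ * ∫ s in ϱ..ϑ, exp (-(s * Ω⁻¹)), for Ω > 0
  have key : ∀ Ω : ℝ, 0 < Ω →
      ε Ω = 1 - (2 * c)⁻¹ * ∫ s in ϱ..ϑ, Real.exp (-(s * Ω⁻¹)) := by
    intro Ω hΩ
    rw [hε, int_exp_aux ϱ ϑ Ω⁻¹ (by positivity)]
    have e1 : Real.exp (-θ / Ω) * Real.exp (Real.sqrt (π / 2) / (μ * Ω))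
        = Real.exp (-(ϱ * Ω⁻¹)) := by
      rw [← Real.exp_add]; congr 1
      rw [hϱ, hc]; field_simp; ring
    have e2 : Real.exp (-θ / Ω) * Real.exp (-(Real.sqrt (π / 2) / (μ * Ω)))
        = Real.exp (-(ϑ * Ω⁻¹)) := by
      rw [← Real.exp_add]; congr 1
      rw [hϑ, hc]; field_simp; ring
    have : μ * Ω / Real.sqrt (2 * π) * Real.exp (-θ / Ω) *
        (Real.exp (Real.sqrt (π / 2) / (μ * Ω)) - Real.exp (-(Real.sqrt (π / 2) / (μ * Ω))))
        = μ * Ω / Real.sqrt (2 * π) * (Real.exp (-(ϱ * Ω⁻¹)) - Real.exp (-(ϑ * Ω⁻¹))) := by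
      rw [mul_sub, mul_assoc, mul_assoc, e1, e2, ← mul_sub]
    rw [this, hsqrt]
    have : μ * Ω / (2 * Real.sqrt (π / 2)) = (2 * c)⁻¹ * (Ω⁻¹)⁻¹ := by
      rw [inv_inv, hc]; field_simp
    rw [this]; ring
  constructor
  · intro x hx y hy hxy
    have hx0 : (0:ℝ) < x := hx
    have hy0 : (0:ℝ) < y := hy
    rw [key x hx0, key y hy0]
    have hint : (∫ s in ϱ..ϑ, Real.exp (-(s * x⁻¹))) < ∫ s in ϱ..ϑ, Real.exp (-(s * y⁻¹)) := by
      apply intervalIntegral.integral_lt_integral_of_continuousOn_of_le_of_exists_lt hab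
      · exact (Real.continuous_exp.comp (by continuity)).continuousOn
      · exact (Real.continuous_exp.comp (by continuity)).continuousOn
      · intro s hs
        have hs0 : 0 ≤ s := le_trans hϱnn hs.1.le
        apply Real.exp_le_exp.2
        have : s * y⁻¹ ≤ s * x⁻¹ :=
          mul_le_mul_of_nonneg_left (by
            exact inv_anti₀ hx0 hxy.le) hs0
        linarith
      · refine ⟨ϑ, ⟨hab.le, le_refl _⟩, Real.exp_lt_exp.2 ?_⟩
        have : ϑ * y⁻¹ < ϑ * x⁻¹ :=
          mul_lt_mul_of_pos_left (by exact inv_strictAnti₀ hx0 hxy) hϑpos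
        linarith
    have h2c : (0:ℝ) < (2 * c)⁻¹ := by positivity
    nlinarith [hint]
  · set h : ℝ → ℝ := fun t => Real.exp (-(ϱ * t)) - Real.exp (-(ϑ * t)) with hh
    have d1 : HasDerivAt (fun t : ℝ => Real.exp (-(ϱ * t))) (-ϱ) 0 := by
      have l1 : HasDerivAt (fun t : ℝ => -(ϱ * t)) (-ϱ) 0 := by
        exact (((hasDerivAt_id (0:ℝ)).const_mul ϱ).neg).congr_deriv (by simp)
      simpa using l1.exp
    have d2 : HasDerivAt (fun t : ℝ => Real.exp (-(ϑ * t))) (-ϑ) 0 := by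
      have l1 : HasDerivAt (fun t : ℝ => -(ϑ * t)) (-ϑ) 0 := by
        exact (((hasDerivAt_id (0:ℝ)).const_mul ϑ).neg).congr_deriv (by simp)
      simpa using l1.exp
    have hD : HasDerivAt h (ϑ - ϱ) 0 := by
      have := d1.sub d2
      exact this.congr_deriv (by ring)
    have hslope : Tendsto (slope h 0) (nhdsWithin 0 {(0:ℝ)}ᶜ) (nhds (ϑ - ϱ)) :=
      hasDerivAt_iff_tendsto_slope.1 hD
    have hinv : Tendsto (fun Ω : ℝ => Ω⁻¹) atTop (nhdsWithin 0 {(0:ℝ)}ᶜ) := by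
      apply tendsto_nhdsWithin_of_tendsto_nhds_of_eventually_within _ tendsto_inv_atTop_zero
      filter_upwards [eventually_gt_atTop (0:ℝ)] with Ω hΩ
      simpa using (inv_pos.2 hΩ).ne'
    have hcomp : Tendsto (fun Ω : ℝ => slope h 0 Ω⁻¹) atTop (nhds (ϑ - ϱ)) :=
      hslope.comp hinv
    have hmain : Tendsto (fun Ω : ℝ => 1 - (2 * c)⁻¹ * slope h 0 Ω⁻¹) atTop
        (nhds (1 - (2 * c)⁻¹ * (ϑ - ϱ))) :=
      tendsto_const_nhds.sub (hcomp.const_mul _)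
    have hval : 1 - (2 * c)⁻¹ * (ϑ - ϱ) = 0 := by
      have : ϑ - ϱ = 2 * c := by rw [hϑ, hϱ]; ring
      rw [this]
      field_simp
      ring
    rw [← hval]
    apply hmain.congr'
    filter_upwards [eventually_gt_atTop (0:ℝ)] with Ω hΩ
    rw [key Ω hΩ, int_exp_aux ϱ ϑ Ω⁻¹ (by positivity)]
    rw [slope_def_field]
    have h0 : h 0 = 0 := by simp [hh]
    rw [h0]
    rw [hh]
    field_simp
    ring
end
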